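/- For every n that is a power of 2, there exist two directed paths G1, G2 on n vertices such that every digraph J (possibly containing Steiner vertices) whose reachability relation restricted to V realizes the join-reachability relation of {G1, G2} has size Ω(n log n). -/

import Mathlib

open Finset

/-- Bit reversal of the `k`-bit binary representation of `x`. -/
def bitrev (k x : ℕ) : ℕ := ∑ i ∈ Finset.range k, if x.testBit i then 2 ^ (k - 1 - i) else 0

lemma sum_two_pow (n : ℕ) : ∑ i ∈ range n, 2^i = 2^n - 1 := by
  induction n with
  | zero => simp
  | succ n ih => rw [Finset.sum_range_succ, ih]; have := Nat.one_le_two_pow (n := n); ring_nf; omega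

lemma testBit_false_iff {a j : ℕ} : a.testBit j = false ↔ a / 2^j % 2 = 0 := by
  rw [Nat.testBit_eq_decide_div_mod_eq]; simp only [decide_eq_false_iff_not]; omega

lemma mod_two_pow_succ_lt {a j : ℕ} (h : a.testBit j = false) : a % 2^(j+1) < 2^j := by
  have h0 : a / 2^j % 2 = 0 := testBit_false_iff.1 h
  have h1 : a % (2^j * 2) = a % 2^j + 2^j * (a / 2^j % 2) := Nat.mod_mul
  rw [h0, mul_zero, add_zero] at h1
  have hp : (2:ℕ)^(j+1) = 2^j*2 := pow_succ 2 j
  rw [hp, h1]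
  exact Nat.mod_lt _ (Nat.pow_pos (by norm_num))

lemma testBit_add_pow {a j : ℕ} (h : a.testBit j = false) (i : ℕ) :
    (a + 2^j).testBit i = if i = j then true else a.testBit i := by
  rcases lt_trichotomy i j with hij | heq | hij
  · rw [if_neg hij.ne]
    have e1 : ((a + 2^j) % 2^j).testBit i = (a + 2^j).testBit i := by
      rw [Nat.testBit_mod_two_pow]; simp [hij]
    have e2 : (a % 2^j).testBit i = a.testBit i := by
      rw [Nat.testBit_mod_two_pow]; simp [hij]
    rw [← e1, ← e2, Nat.add_mod_right]
  · subst heq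
    rw [if_pos rfl]
    have h0 : a / 2^i % 2 = 0 := testBit_false_iff.1 h
    have e : (a + 2^i) / 2^i = a / 2^i + 1 :=
      Nat.add_div_right _ (Nat.pow_pos (by norm_num))
    rw [Nat.testBit_eq_decide_div_mod_eq, e]
    simp only [decide_eq_true_eq]
    omega
  · rw [if_neg hij.ne']
    have hB : (0:ℕ) < 2^(j+1) := Nat.pow_pos (by norm_num)
    have hp : (2:ℕ)^(j+1) = 2^j*2 := pow_succ 2 j
    have hr : a % 2^(j+1) < 2^j := mod_two_pow_succ_lt h
    have hd : (a + 2^j) / 2^(j+1) = a / 2^(j+1) := by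
      conv_lhs => rw [← Nat.div_add_mod a (2^(j+1))]
      rw [add_assoc, Nat.mul_add_div hB]
      have : (a % 2^(j+1) + 2^j) / 2^(j+1) = 0 := Nat.div_eq_of_lt (by omega)
      omega
    have key : ∀ b : ℕ, b / 2^i = b / 2^(j+1) / 2^(i - (j+1)) := by
      intro b
      rw [Nat.div_div_eq_div_mul, ← pow_add]
      congr 2
      omega
    rw [Nat.testBit_eq_decide_div_mod_eq, Nat.testBit_eq_decide_div_mod_eq, key, key a, hd]

lemma bitrev_add_pow {k j a : ℕ} (hj : j < k) (h : a.testBit j = false) :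
    bitrev k (a + 2^j) = bitrev k a + 2^(k-1-j) := by
  unfold bitrev
  rw [← Finset.sum_erase_add _ _ (mem_range.2 hj), ← Finset.sum_erase_add _ _ (mem_range.2 hj)]
  have e : ∀ i ∈ (range k).erase j,
      (if (a + 2^j).testBit i then 2^(k-1-i) else 0) = (if a.testBit i then 2^(k-1-i) else 0) := by
    intro i hi
    rw [testBit_add_pow h, if_neg (Finset.mem_erase.1 hi).1]
  rw [Finset.sum_congr rfl e, testBit_add_pow h, if_pos rfl, h]
  simp [add_assoc]

lemma add_pow_lt {k j a : ℕ} (hj : j < k) (ha : a < 2^k) (h : a.testBit j = false) :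
    a + 2^j < 2^k := by
  have hB : (0:ℕ) < 2^(j+1) := Nat.pow_pos (by norm_num)
  have hr : a % 2^(j+1) < 2^j := mod_two_pow_succ_lt h
  set q := a / 2^(j+1) with hq
  have hdm : 2^(j+1) * q + a % 2^(j+1) = a := Nat.div_add_mod a _
  have hpe : 2^(j+1) * 2^(k-1-j) = 2^k := by rw [← pow_add]; congr 1; omega
  have hqlt : q < 2^(k-1-j) := by
    rw [hq, Nat.div_lt_iff_lt_mul hB]
    calc a < 2^k := ha
    _ = 2^(k-1-j) * 2^(j+1) := by rw [mul_comm]; exact hpe.symm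
  have e1 : 2^(j+1) * (q+1) ≤ 2^(j+1) * 2^(k-1-j) := Nat.mul_le_mul_left _ (by omega)
  have e2 : 2^(j+1) * (q+1) = 2^(j+1)*q + 2^(j+1) := by ring
  have e3 : (2:ℕ)^(j+1) = 2^j * 2 := pow_succ 2 j
  omega

lemma bitrev_lt (k x : ℕ) : bitrev k x < 2^k := by
  have h1 : bitrev k x ≤ ∑ i ∈ range k, 2^(k-1-i) := by
    apply Finset.sum_le_sum
    intro i _
    split <;> simp
  have h2 : ∑ i ∈ range k, 2^(k-1-i) = 2^k - 1 := by
    rw [Finset.sum_range_reflect (fun i => 2^i) k, sum_two_pow]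
  have := Nat.one_le_two_pow (n := k)
  omega

lemma bitrev_decomp (k x : ℕ) :
    bitrev (k+1) x = bitrev k (x/2) + (if x.testBit 0 then 2^k else 0) := by
  unfold bitrev
  rw [Finset.sum_range_succ']
  congr 1
  · apply Finset.sum_congr rfl
    intro i _
    rw [Nat.testBit_succ]
    have e : k + 1 - 1 - (i+1) = k - 1 - i := by omega
    rw [e]

lemma bitrev_inj : ∀ k x y, x < 2^k → y < 2^k → bitrev k x = bitrev k y → x = y := by
  intro k
  induction k with
  | zero => intro x y hx hy _; interval_cases x <;> interval_cases y <;> rfl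
  | succ k ih =>
    intro x y hx hy h
    rw [bitrev_decomp, bitrev_decomp] at h
    have hp : (2:ℕ)^(k+1) = 2^k*2 := pow_succ 2 k
    have hx2 : x/2 < 2^k := by omega
    have hy2 : y/2 < 2^k := by omega
    have bx := bitrev_lt k (x/2)
    have by' := bitrev_lt k (y/2)
    have hb0 : x.testBit 0 = y.testBit 0 := by
      cases hbx : x.testBit 0 <;> cases hby : y.testBit 0 <;> rw [hbx, hby] at h <;>
        simp at h <;> omega
    have hdiv : x/2 = y/2 := by
      apply ih _ _ hx2 hy2
      rw [hb0] at h
      split at h <;> omega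
    have hm : x % 2 = y % 2 := by
      have ex : x.testBit 0 = decide (x % 2 = 1) := Nat.testBit_zero x
      have ey : y.testBit 0 = decide (y % 2 = 1) := Nat.testBit_zero y
      rw [ex, ey] at hb0
      rcases Nat.mod_two_eq_zero_or_one x with h1 | h1 <;>
        rcases Nat.mod_two_eq_zero_or_one y with h2 | h2 <;> simp [h1, h2] at hb0 ⊢ <;> omega
    omega

lemma highpart_lt (k j x : ℕ) :
    (∑ i ∈ Finset.Ico j k, if x.testBit i then 2^(k-1-i) else 0) < 2^(k-j) := by
  rcases le_or_gt j k with hjk | hjk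
  · have h1 : (∑ i ∈ Finset.Ico j k, if x.testBit i then 2^(k-1-i) else 0)
        ≤ ∑ i ∈ Finset.Ico j k, 2^(k-1-i) := by
      apply Finset.sum_le_sum; intro i _; split <;> simp
    have h2 : ∑ i ∈ Finset.Ico j k, 2^(k-1-i) = 2^(k-j) - 1 := by
      rw [Finset.sum_Ico_eq_sum_range]
      have e : ∀ t, (2:ℕ)^(k-1-(j+t)) = 2^((k-j)-1-t) := by intro t; congr 1; omega
      calc ∑ t ∈ range (k-j), 2^(k-1-(j+t)) = ∑ t ∈ range (k-j), 2^((k-j)-1-t) :=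
            Finset.sum_congr rfl (fun t _ => e t)
        _ = ∑ t ∈ range (k-j), 2^t := Finset.sum_range_reflect (fun i => 2^i) (k-j)
        _ = 2^(k-j) - 1 := sum_two_pow _
    have := Nat.one_le_two_pow (n := k - j)
    omega
  · rw [Finset.Ico_eq_empty (by omega)]
    simp

lemma highpart_congr (k j x y : ℕ) (h : x / 2^j = y / 2^j) :
    (∑ i ∈ Finset.Ico j k, if x.testBit i then 2^(k-1-i) else 0)
    = ∑ i ∈ Finset.Ico j k, if y.testBit i then 2^(k-1-i) else 0 := by
  apply Finset.sum_congr rfl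
  intro i hi
  have hji : j ≤ i := (Finset.mem_Ico.1 hi).1
  have key : ∀ b : ℕ, b / 2^i = b / 2^j / 2^(i-j) := by
    intro b; rw [Nat.div_div_eq_div_mul, ← pow_add]; congr 2; omega
  have : x.testBit i = y.testBit i := by
    rw [Nat.testBit_eq_decide_div_mod_eq, Nat.testBit_eq_decide_div_mod_eq, key, key y, h]
  rw [this]

lemma bitrev_split (k j x : ℕ) (hj : j ≤ k) :
    bitrev k x = (∑ i ∈ range j, if x.testBit i then 2^(k-1-i) else 0)
      + ∑ i ∈ Finset.Ico j k, if x.testBit i then 2^(k-1-i) else 0 :=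
  (Finset.sum_range_add_sum_Ico _ hj).symm

lemma dvd_lowpart (k j x : ℕ) (hj : j ≤ k) :
    2^(k-j) ∣ ∑ i ∈ range j, if x.testBit i then 2^(k-1-i) else 0 := by
  apply Finset.dvd_sum
  intro i hi
  have hij : i < j := Finset.mem_range.1 hi
  split
  · exact pow_dvd_pow 2 (by omega)
  · exact dvd_zero _

lemma highpart_congr' (k j x y : ℕ) (h : x / 2^(j+1) = y / 2^(j+1))
    (hb : x.testBit j = y.testBit j) :
    (∑ i ∈ Finset.Ico j k, if x.testBit i then 2^(k-1-i) else 0)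
    = ∑ i ∈ Finset.Ico j k, if y.testBit i then 2^(k-1-i) else 0 := by
  apply Finset.sum_congr rfl
  intro i hi
  have hji : j ≤ i := (Finset.mem_Ico.1 hi).1
  rcases eq_or_lt_of_le hji with heq | hlt
  · subst heq; rw [hb]
  · have key : ∀ b : ℕ, b / 2^i = b / 2^(j+1) / 2^(i-(j+1)) := by
      intro b; rw [Nat.div_div_eq_div_mul, ← pow_add]; congr 2; omega
    have : x.testBit i = y.testBit i := by
      rw [Nat.testBit_eq_decide_div_mod_eq, Nat.testBit_eq_decide_div_mod_eq, key, key y, h]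
    rw [this]

lemma no_cross_core {k j a a' : ℕ} (hj : j < k) (ha : a < 2^k) (ha' : a' < 2^k)
    (hb : a.testBit j = false) (hb' : a'.testBit j = false) (hlt : a < a')
    (h2 : a' ≤ a + 2^j)
    (h3 : bitrev k a ≤ bitrev k a' + 2^(k-1-j))
    (h4 : bitrev k a' ≤ bitrev k a + 2^(k-1-j)) : False := by
  have hne2 : a' ≠ a + 2^j := by
    intro he
    have := testBit_add_pow hb j
    rw [if_pos rfl, ← he, hb'] at this
    exact Bool.false_ne_true this
  have hlt2 : a' < a + 2^j := lt_of_le_of_ne h2 hne2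
  have hB : (0:ℕ) < 2^(j+1) := Nat.pow_pos (by norm_num)
  have hp : (2:ℕ)^(j+1) = 2^j*2 := pow_succ 2 j
  set q := a / 2^(j+1) with hq
  set q' := a' / 2^(j+1) with hq'
  have hra : a % 2^(j+1) < 2^j := mod_two_pow_succ_lt hb
  have hra' : a' % 2^(j+1) < 2^j := mod_two_pow_succ_lt hb'
  have hdm : 2^(j+1) * q + a % 2^(j+1) = a := Nat.div_add_mod a _
  have hdm' : 2^(j+1) * q' + a' % 2^(j+1) = a' := Nat.div_add_mod a' _
  have hqq : q = q' := by
    rcases lt_trichotomy q q' with h | h | h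
    · have e1 : 2^(j+1) * (q+1) ≤ 2^(j+1) * q' := Nat.mul_le_mul_left _ (by omega)
      have e2 : 2^(j+1) * (q+1) = 2^(j+1)*q + 2^(j+1) := by ring
      omega
    · exact h
    · have e1 : 2^(j+1) * (q'+1) ≤ 2^(j+1) * q := Nat.mul_le_mul_left _ (by omega)
      have e2 : 2^(j+1) * (q'+1) = 2^(j+1)*q' + 2^(j+1) := by ring
      omega
  have hsa := bitrev_split k j a hj.le
  have hsa' := bitrev_split k j a' hj.le
  have hH := highpart_congr' k j a a' (by rw [← hq, ← hq', hqq]) (by rw [hb, hb'])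
  rw [hH] at hsa
  obtain ⟨u, hu⟩ := dvd_lowpart k j a hj.le
  obtain ⟨u', hu'⟩ := dvd_lowpart k j a' hj.le
  have hpe : (2:ℕ)^(k-j) = 2^(k-1-j) * 2 := by
    rw [← pow_succ]; congr 1; omega
  have hf1 : (1:ℕ) ≤ 2^(k-1-j) := Nat.one_le_two_pow
  have hLL : 2^(k-j)*u ≤ 2^(k-j)*u' + 2^(k-1-j) ∧ 2^(k-j)*u' ≤ 2^(k-j)*u + 2^(k-1-j) := by
    rw [← hu, ← hu']
    omega
  have huu : u = u' := by
    rcases lt_trichotomy u u' with h | h | h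
    · have e1 : 2^(k-j) * (u+1) ≤ 2^(k-j) * u' := Nat.mul_le_mul_left _ (by omega)
      have e2 : 2^(k-j) * (u+1) = 2^(k-j)*u + 2^(k-j) := by ring
      omega
    · exact h
    · have e1 : 2^(k-j) * (u'+1) ≤ 2^(k-j) * u := Nat.mul_le_mul_left _ (by omega)
      have e2 : 2^(k-j) * (u'+1) = 2^(k-j)*u' + 2^(k-j) := by ring
      omega
  rw [huu] at hu
  have heq : bitrev k a = bitrev k a' := by omega
  exact absurd (bitrev_inj k a a' ha ha' heq) (by omega)

lemma no_cross {k j a a' : ℕ} (hj : j < k) (ha : a < 2^k) (ha' : a' < 2^k)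
    (hb : a.testBit j = false) (hb' : a'.testBit j = false) (hne : a ≠ a')
    (h1 : a ≤ a' + 2^j) (h2 : a' ≤ a + 2^j)
    (h3 : bitrev k a ≤ bitrev k a' + 2^(k-1-j))
    (h4 : bitrev k a' ≤ bitrev k a + 2^(k-1-j)) : False := by
  rcases lt_or_gt_of_ne hne with h | h
  · exact no_cross_core hj ha ha' hb hb' h h2 h3 h4
  · exact no_cross_core hj ha' ha hb' hb h h1 h4 h3

lemma card_A_ge (k j : ℕ) (hj : j < k) :
    2^(k-1) ≤ ((range (2^k)).filter (fun a => a.testBit j = false)).card := by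
  classical
  have hBj : (0:ℕ) < 2^j := Nat.pow_pos (by norm_num)
  have hB : (0:ℕ) < 2^(j+1) := Nat.pow_pos (by norm_num)
  have hp : (2:ℕ)^(j+1) = 2^j*2 := pow_succ 2 j
  have : (range (2^(k-1))).card ≤ ((range (2^k)).filter (fun a => a.testBit j = false)).card := by
    apply Finset.card_le_card_of_injOn (fun m => (m / 2^j) * 2^(j+1) + m % 2^j)
    · intro m hm
      rw [Finset.mem_coe, Finset.mem_range] at hm
      set qm := m / 2^j with hqm
      have hdm : 2^j * qm + m % 2^j = m := Nat.div_add_mod m _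
      have hrm : m % 2^j < 2^j := Nat.mod_lt _ hBj
      have hpe : 2^j * 2^(k-1-j) = 2^(k-1) := by rw [← pow_add]; congr 1; omega
      have hpe2 : 2^(j+1) * 2^(k-1-j) = 2^k := by rw [← pow_add]; congr 1; omega
      have hqlt : qm < 2^(k-1-j) := by
        rw [hqm, Nat.div_lt_iff_lt_mul hBj]
        calc m < 2^(k-1) := hm
        _ = 2^(k-1-j) * 2^j := by rw [mul_comm]; exact hpe.symm
      rw [Finset.mem_coe, Finset.mem_filter, Finset.mem_range]
      dsimp only
      rw [← hqm]
      constructor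
      · have e1 : 2^(j+1) * (qm+1) ≤ 2^(j+1) * 2^(k-1-j) := Nat.mul_le_mul_left _ (by omega)
        have e2 : 2^(j+1) * (qm+1) = 2^(j+1)*qm + 2^(j+1) := by ring
        have e3 : qm * 2^(j+1) = 2^(j+1) * qm := by ring
        omega
      · rw [testBit_false_iff]
        have e : (qm * 2^(j+1) + m % 2^j) / 2^j = 2 * qm := by
          rw [show qm * 2^(j+1) = 2^j * (2 * qm) by rw [hp]; ring]
          rw [Nat.mul_add_div hBj, Nat.div_eq_of_lt hrm]
          omega
        rw [e]
        omega
    · intro m1 h1 m2 h2 heq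
      simp only at heq
      have key : ∀ m : ℕ, ((m / 2^j) * 2^(j+1) + m % 2^j) / 2^(j+1) = m / 2^j ∧
          ((m / 2^j) * 2^(j+1) + m % 2^j) % 2^(j+1) = m % 2^j := by
        intro m
        have hrm : m % 2^j < 2^j := Nat.mod_lt _ hBj
        have hlt2 : m % 2^j < 2^(j+1) := lt_of_lt_of_le hrm (by rw [hp]; omega)
        constructor
        · rw [show (m / 2^j) * 2^(j+1) + m % 2^j = 2^(j+1) * (m / 2^j) + m % 2^j by ring]
          rw [Nat.mul_add_div hB, Nat.div_eq_of_lt hlt2]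
          omega
        · rw [show (m / 2^j) * 2^(j+1) + m % 2^j = 2^(j+1) * (m / 2^j) + m % 2^j by ring]
          rw [Nat.mul_add_mod, Nat.mod_eq_of_lt hlt2]
      have e1 := key m1
      have e2 := key m2
      have d1 : m1 / 2^j = m2 / 2^j := by rw [← e1.1, ← e2.1, heq]
      have d2 : m1 % 2^j = m2 % 2^j := by rw [← e1.2, ← e2.2, heq]
      have dm1 : 2^j * (m1 / 2^j) + m1 % 2^j = m1 := Nat.div_add_mod m1 _
      have dm2 : 2^j * (m2 / 2^j) + m2 % 2^j = m2 := Nat.div_add_mod m2 _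
      rw [d1, d2] at dm1
      omega
  simpa using this

lemma geom_aux (X : ℕ) : ∀ K : ℕ,
    (∑ j ∈ range K, if X ≤ 2^j then (X:ℝ)/2^j else 0) ≤ max 0 (2 - 2*(X:ℝ)/2^K) := by
  intro K
  induction K with
  | zero => simp
  | succ K ih =>
    rw [Finset.sum_range_succ]
    have hpow : (0:ℝ) < 2^K := by positivity
    have hpow' : (0:ℝ) < 2^(K+1) := by positivity
    have hps : (2:ℝ)^(K+1) = 2^K * 2 := pow_succ 2 K
    by_cases hc : X ≤ 2^K
    · rw [if_pos hc]
      have hcr : (X:ℝ) ≤ 2^K := by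
        calc (X:ℝ) ≤ ((2^K : ℕ) : ℝ) := by exact_mod_cast hc
        _ = 2^K := by push_cast; ring
      have hnn : (0:ℝ) ≤ 2 - 2*(X:ℝ)/2^K := by
        rw [sub_nonneg, div_le_iff₀ hpow]
        nlinarith
      rw [max_eq_right hnn] at ih
      have step : (2 - 2*(X:ℝ)/2^K) + (X:ℝ)/2^K = 2 - 2*(X:ℝ)/2^(K+1) := by
        rw [hps]
        field_simp
        ring
      have : (∑ j ∈ range K, if X ≤ 2^j then (X:ℝ)/2^j else 0) + (X:ℝ)/2^K
          ≤ 2 - 2*(X:ℝ)/2^(K+1) := by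
        rw [← step]; linarith
      exact this.trans (le_max_right _ _)
    · rw [if_neg hc, add_zero]
      refine ih.trans (max_le_max le_rfl ?_)
      have h1 : 2*(X:ℝ)/2^(K+1) ≤ 2*(X:ℝ)/2^K := by
        apply div_le_div_of_nonneg_left (by positivity) hpow
        rw [hps]; nlinarith
      linarith

lemma geom_bound (X : ℕ) (K : ℕ) :
    (∑ j ∈ range K, if X ≤ 2^j then (X:ℝ)/2^j else 0) ≤ 2 := by
  refine (geom_aux X K).trans (max_le (by norm_num) ?_)
  have : (0:ℝ) ≤ 2*(X:ℝ)/2^K := by positivity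
  linarith

open Classical in
noncomputable def alph {k : ℕ} {W : Type} [Fintype W] (J : W → W → Prop) (ι : Fin (2^k) → W)
    (f : Fin (2^k) → ℕ) (w : W) : ℕ :=
  Finset.univ.sup (fun x => if Relation.ReflTransGen J (ι x) w then f x else 0)

lemma alph_mono {k : ℕ} {W : Type} [Fintype W] (J : W → W → Prop) (ι : Fin (2^k) → W)
    {u v : W} (h : Relation.ReflTransGen J u v) (f : Fin (2^k) → ℕ) :
    alph J ι f u ≤ alph J ι f v := by
  classical
  apply Finset.sup_le
  intro x _
  split
  · next hx =>
    have h2 : Relation.ReflTransGen J (ι x) v := hx.trans h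
    have h1 := Finset.le_sup
      (f := fun y => if Relation.ReflTransGen J (ι y) v then f y else 0) (Finset.mem_univ x)
    simp only [h2, if_true] at h1
    exact h1
  · exact Nat.zero_le _

lemma alph_le {k : ℕ} {W : Type} [Fintype W] (J : W → W → Prop) (ι : Fin (2^k) → W)
    (f : Fin (2^k) → ℕ) (w : W) {B : ℕ}
    (h : ∀ x : Fin (2^k), Relation.ReflTransGen J (ι x) w → f x ≤ B) :
    alph J ι f w ≤ B := by
  classical
  apply Finset.sup_le
  intro x _
  split
  · next hx => exact h x hx
  · exact Nat.zero_le _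

lemma alph_ge {k : ℕ} {W : Type} [Fintype W] (J : W → W → Prop) (ι : Fin (2^k) → W)
    (f : Fin (2^k) → ℕ) {w : W} {a : Fin (2^k)} (h : Relation.ReflTransGen J (ι a) w) :
    f a ≤ alph J ι f w := by
  classical
  have h1 := Finset.le_sup
    (f := fun y => if Relation.ReflTransGen J (ι y) w then f y else 0) (Finset.mem_univ a)
  simp only [h, if_true] at h1
  exact h1

lemma alph_eq {k : ℕ} {W : Type} [Fintype W] (J : W → W → Prop) (ι : Fin (2^k) → W)
    (f : Fin (2^k) → ℕ) (b : Fin (2^k))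
    (hb : ∀ x : Fin (2^k), Relation.ReflTransGen J (ι x) (ι b) → f x ≤ f b) :
    alph J ι f (ι b) = f b :=
  le_antisymm (alph_le J ι f _ hb) (alph_ge J ι f Relation.ReflTransGen.refl)

lemma exists_arcset {k : ℕ} {W : Type} [Fintype W] (J : W → W → Prop) (ι : Fin (2^k) → W)
    {s t : W} (h : Relation.ReflTransGen J s t) :
    ∃ S : Finset (W × W),
      (∀ e ∈ S, J e.1 e.2 ∧ Relation.ReflTransGen J s e.1 ∧ Relation.ReflTransGen J e.2 t) ∧
      ∀ f : Fin (2^k) → ℕ,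
        alph J ι f t ≤ alph J ι f s + ∑ e ∈ S, (alph J ι f e.2 - alph J ι f e.1) := by
  classical
  induction h with
  | refl => exact ⟨∅, by simp, fun f => by simp⟩
  | @tail t' t hst' hJ ih =>
    obtain ⟨S, hS1, hS2⟩ := ih
    by_cases hmem : (t', t) ∈ S
    · refine ⟨S, ?_, ?_⟩
      · intro e he
        obtain ⟨h1, h2, h3⟩ := hS1 e he
        exact ⟨h1, h2, h3.tail hJ⟩
      · intro f
        have h1 : Relation.ReflTransGen J t t' := (hS1 _ hmem).2.2
        exact (alph_mono J ι h1 f).trans (hS2 f)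
    · refine ⟨insert (t', t) S, ?_, ?_⟩
      · intro e he
        rcases Finset.mem_insert.1 he with rfl | he
        · exact ⟨hJ, hst', Relation.ReflTransGen.refl⟩
        · obtain ⟨h1, h2, h3⟩ := hS1 e he
          exact ⟨h1, h2, h3.tail hJ⟩
      · intro f
        rw [Finset.sum_insert hmem]
        dsimp only
        have h2 := hS2 f
        have h3 : alph J ι f t' ≤ alph J ι f t :=
          alph_mono J ι (Relation.ReflTransGen.single hJ) f
        omega

theorem stmt_7 :
    ∃ c : ℝ, 0 < c ∧
      ∀ (k : ℕ) (W : Type) (instW : Fintype W) (J : W → W → Prop) (ι : Fin (2 ^ k) → W),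
        Function.Injective ι →
        (∀ a b : Fin (2 ^ k),
          (Relation.ReflTransGen J (ι a) (ι b) ↔
            ((a : ℕ) ≤ (b : ℕ) ∧ bitrev k (a : ℕ) ≤ bitrev k (b : ℕ)))) →
        c * ((2 ^ k * k : ℕ) : ℝ) ≤
          ((@Fintype.card W instW : ℝ) + ({p : W × W | J p.1 p.2}.ncard : ℝ)) := by
  classical
  refine ⟨1/4, by norm_num, ?_⟩
  intro k W instW J ι hι hre
  set E : Finset (W × W) := Finset.univ.filter (fun e => J e.1 e.2) with hE
  have hncard : ({p : W × W | J p.1 p.2}.ncard : ℝ) = (E.card : ℝ) := by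
    congr 1
    have hset : {p : W × W | J p.1 p.2} = (↑E : Set (W × W)) := by
      ext p; simp [hE]
    rw [hset, Set.ncard_coe_finset]
  -- abbreviations
  set val : Fin (2^k) → ℕ := fun x => (x : ℕ) with hvaldef
  set brv : Fin (2^k) → ℕ := fun x => bitrev k (x : ℕ) with hbrvdef
  set X : W × W → ℕ := fun e => alph J ι val e.2 - alph J ι val e.1 with hXdef
  set Y : W × W → ℕ := fun e => alph J ι brv e.2 - alph J ι brv e.1 with hYdef
  have hval : ∀ b : Fin (2^k), alph J ι val (ι b) = (b : ℕ) := by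
    intro b
    exact alph_eq J ι val b (fun x hx => ((hre x b).1 hx).1)
  have hbrv : ∀ b : Fin (2^k), alph J ι brv (ι b) = bitrev k (b : ℕ) := by
    intro b
    exact alph_eq J ι brv b (fun x hx => ((hre x b).1 hx).2)
  -- choice of arc sets
  have key : ∀ j a : ℕ, ∃ S : Finset (W × W),
      ∀ (hj : j < k) (ha : a < 2^k) (hb : a.testBit j = false),
        (∀ e ∈ S, J e.1 e.2 ∧ Relation.ReflTransGen J (ι ⟨a, ha⟩) e.1 ∧
           Relation.ReflTransGen J e.2 (ι ⟨a + 2^j, add_pow_lt hj ha hb⟩)) ∧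
        2^j ≤ ∑ e ∈ S, X e ∧ 2^(k-1-j) ≤ ∑ e ∈ S, Y e := by
    intro j a
    by_cases hcond : j < k ∧ a < 2^k ∧ a.testBit j = false
    · obtain ⟨hj, ha, hb⟩ := hcond
      have hblt := add_pow_lt hj ha hb
      have hreach : Relation.ReflTransGen J (ι ⟨a, ha⟩) (ι ⟨a + 2^j, hblt⟩) := by
        rw [hre]
        constructor
        · show a ≤ a + 2^j
          exact Nat.le_add_right _ _
        · show bitrev k a ≤ bitrev k (a + 2^j)
          rw [bitrev_add_pow hj hb]
          exact Nat.le_add_right _ _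
      obtain ⟨S, hS1, hS2⟩ := exists_arcset J ι hreach
      have hXe : ∀ e : W × W, X e = alph J ι val e.2 - alph J ι val e.1 := fun e => rfl
      have hYe : ∀ e : W × W, Y e = alph J ι brv e.2 - alph J ι brv e.1 := fun e => rfl
      refine ⟨S, fun hj' ha' hb' => ⟨hS1, ?_, ?_⟩⟩
      · have h2 := hS2 val
        rw [hval, hval] at h2
        have h2' : a + 2^j ≤ a + ∑ e ∈ S, (alph J ι val e.2 - alph J ι val e.1) := h2
        simp only [hXe]
        omega
      · have h2 := hS2 brv
        rw [hbrv, hbrv] at h2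
        have h2' : bitrev k (a + 2^j) ≤ bitrev k a
            + ∑ e ∈ S, (alph J ι brv e.2 - alph J ι brv e.1) := h2
        rw [bitrev_add_pow hj hb] at h2'
        simp only [hYe]
        omega
    · exact ⟨∅, fun hj ha hb => absurd ⟨hj, ha, hb⟩ hcond⟩
  choose S hS using key
  -- uniqueness at each level
  have uniq : ∀ j a a', j < k → ∀ (ha : a < 2^k) (ha' : a' < 2^k),
      a.testBit j = false → a'.testBit j = false →
      ∀ e : W × W, e ∈ S j a → e ∈ S j a' → a = a' := by
    intro j a a' hj ha ha' hb hb' e he he'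
    by_contra hne
    obtain ⟨hS1, -, -⟩ := hS j a hj ha hb
    obtain ⟨hS1', -, -⟩ := hS j a' hj ha' hb'
    obtain ⟨hJe, hsa, hsb⟩ := hS1 e he
    obtain ⟨-, hsa', hsb'⟩ := hS1' e he'
    have c1 := (hre _ _).1 (hsa.trans ((Relation.ReflTransGen.single hJe).trans hsb'))
    have c2 := (hre _ _).1 (hsa'.trans ((Relation.ReflTransGen.single hJe).trans hsb))
    have d1 : bitrev k a ≤ bitrev k a' + 2^(k-1-j) := by
      have := c1.2
      show _ ≤ _
      calc bitrev k a ≤ bitrev k (a' + 2^j) := this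
      _ = bitrev k a' + 2^(k-1-j) := bitrev_add_pow hj hb'
    have d2 : bitrev k a' ≤ bitrev k a + 2^(k-1-j) := by
      calc bitrev k a' ≤ bitrev k (a + 2^j) := c2.2
      _ = bitrev k a + 2^(k-1-j) := bitrev_add_pow hj hb
    exact no_cross hj ha ha' hb hb' hne c1.1 c2.1 d1 d2
  -- the main counting bound
  set A : ℕ → Finset ℕ := fun j => (range (2^k)).filter (fun a => a.testBit j = false) with hA
  have hmemA : ∀ j a, a ∈ A j ↔ (a < 2^k ∧ a.testBit j = false) := by
    intro j a; simp [hA]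
  have hSsubE : ∀ j a, j < k → ∀ (ha : a < 2^k), a.testBit j = false → S j a ⊆ E := by
    intro j a hj ha hb e he
    obtain ⟨hS1, -, -⟩ := hS j a hj ha hb
    simp only [hE, Finset.mem_filter, Finset.mem_univ, true_and]
    exact (hS1 e he).1
  have main : ((k : ℝ) * 2^k) ≤ 4 * E.card := by
    have low : ((k : ℝ) * 2^k) ≤ ∑ j ∈ range k, ∑ a ∈ A j,
        (((∑ e ∈ S j a, X e : ℕ) : ℝ)/2^j + ((∑ e ∈ S j a, Y e : ℕ) : ℝ)/2^(k-1-j)) := by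
      have per : ∀ j ∈ range k, (2^k : ℝ) ≤ ∑ a ∈ A j,
          (((∑ e ∈ S j a, X e : ℕ) : ℝ)/2^j + ((∑ e ∈ S j a, Y e : ℕ) : ℝ)/2^(k-1-j)) := by
        intro j hjr
        have hj : j < k := Finset.mem_range.1 hjr
        have hterm : ∀ a ∈ A j, (2:ℝ) ≤
            (((∑ e ∈ S j a, X e : ℕ) : ℝ)/2^j + ((∑ e ∈ S j a, Y e : ℕ) : ℝ)/2^(k-1-j)) := by
          intro a haA
          obtain ⟨ha, hb⟩ := (hmemA j a).1 haA
          obtain ⟨-, hX2, hY2⟩ := hS j a hj ha hb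
          have p1 : (1:ℝ) ≤ ((∑ e ∈ S j a, X e : ℕ) : ℝ)/2^j := by
            rw [le_div_iff₀ (by positivity)]
            have : ((2^j : ℕ) : ℝ) ≤ ((∑ e ∈ S j a, X e : ℕ) : ℝ) := by exact_mod_cast hX2
            push_cast at this ⊢
            linarith
          have p2 : (1:ℝ) ≤ ((∑ e ∈ S j a, Y e : ℕ) : ℝ)/2^(k-1-j) := by
            rw [le_div_iff₀ (by positivity)]
            have : ((2^(k-1-j) : ℕ) : ℝ) ≤ ((∑ e ∈ S j a, Y e : ℕ) : ℝ) := by exact_mod_cast hY2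
            push_cast at this ⊢
            linarith
          linarith
        calc (2^k : ℝ) = 2 * (2^(k-1) : ℕ) := by
              push_cast
              rw [← pow_succ']
              congr 1
              omega
        _ ≤ 2 * ((A j).card : ℝ) := by
              have := card_A_ge k j hj
              have : ((2^(k-1) : ℕ) : ℝ) ≤ ((A j).card : ℝ) := by exact_mod_cast this
              linarith
        _ = ∑ a ∈ A j, (2:ℝ) := by rw [Finset.sum_const]; ring
        _ ≤ _ := Finset.sum_le_sum hterm
      calc ((k:ℝ) * 2^k) = ∑ j ∈ range k, (2^k : ℝ) := by
            rw [Finset.sum_const, Finset.card_range]; ring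
      _ ≤ _ := Finset.sum_le_sum per
    have eq1 : ∀ j ∈ range k, ∀ a ∈ A j,
        (((∑ e ∈ S j a, X e : ℕ) : ℝ)/2^j + ((∑ e ∈ S j a, Y e : ℕ) : ℝ)/2^(k-1-j))
        = ∑ e ∈ E, (if e ∈ S j a then ((X e : ℝ)/2^j + (Y e : ℝ)/2^(k-1-j)) else 0) := by
      intro j hjr a haA
      have hj := Finset.mem_range.1 hjr
      obtain ⟨ha, hb⟩ := (hmemA j a).1 haA
      rw [Finset.sum_ite_mem, Finset.inter_eq_right.2 (hSsubE j a hj ha hb)]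
      rw [Finset.sum_add_distrib]
      push_cast
      rw [Finset.sum_div, Finset.sum_div]
    have low2 : ((k : ℝ) * 2^k) ≤ ∑ e ∈ E, ∑ j ∈ range k, ∑ a ∈ A j,
        (if e ∈ S j a then ((X e : ℝ)/2^j + (Y e : ℝ)/2^(k-1-j)) else 0) := by
      refine low.trans (le_of_eq ?_)
      rw [Finset.sum_comm]
      apply Finset.sum_congr rfl
      intro j hjr
      rw [Finset.sum_comm]
      exact Finset.sum_congr rfl (fun a haA => eq1 j hjr a haA)
    have per_arc : ∀ e ∈ E, (∑ j ∈ range k, ∑ a ∈ A j,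
        (if e ∈ S j a then ((X e : ℝ)/2^j + (Y e : ℝ)/2^(k-1-j)) else 0)) ≤ 4 := by
      intro e heE
      have perj : ∀ j ∈ range k, (∑ a ∈ A j,
          (if e ∈ S j a then ((X e : ℝ)/2^j + (Y e : ℝ)/2^(k-1-j)) else 0)) ≤
          (if X e ≤ 2^j then ((X e : ℕ):ℝ)/2^j else 0)
            + (if Y e ≤ 2^(k-1-j) then ((Y e : ℕ):ℝ)/2^(k-1-j) else 0) := by
        intro j hjr
        have hj := Finset.mem_range.1 hjr
        by_cases hex : ∃ a ∈ A j, e ∈ S j a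
        · obtain ⟨a0, ha0A, he0⟩ := hex
          obtain ⟨ha0, hb0⟩ := (hmemA j a0).1 ha0A
          have hsingle : (∑ a ∈ A j,
              (if e ∈ S j a then ((X e : ℝ)/2^j + (Y e : ℝ)/2^(k-1-j)) else 0))
              = ((X e : ℝ)/2^j + (Y e : ℝ)/2^(k-1-j)) := by
            rw [Finset.sum_eq_single_of_mem a0 ha0A]
            · rw [if_pos he0]
            · intro b hbA hbne
              obtain ⟨hbb, hbb2⟩ := (hmemA j b).1 hbA
              rw [if_neg]
              intro hbe
              exact hbne (uniq j b a0 hj hbb ha0 hbb2 hb0 e hbe he0)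
          rw [hsingle]
          -- bounds on X e, Y e
          obtain ⟨hS1, -, -⟩ := hS j a0 hj ha0 hb0
          obtain ⟨hJe, hsa, hsb⟩ := hS1 e he0
          have bX : X e ≤ 2^j := by
            have b1 : alph J ι val e.2 ≤ a0 + 2^j := by
              apply alph_le
              intro x hx
              have := ((hre x _).1 (hx.trans hsb)).1
              exact this
            have b2 : a0 ≤ alph J ι val e.1 := alph_ge J ι val hsa
            have b3 : alph J ι val e.1 ≤ alph J ι val e.2 :=
              alph_mono J ι (Relation.ReflTransGen.single hJe) val
            have hXe : X e = alph J ι val e.2 - alph J ι val e.1 := rfl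
            omega
          have bY : Y e ≤ 2^(k-1-j) := by
            have b1 : alph J ι brv e.2 ≤ bitrev k a0 + 2^(k-1-j) := by
              apply alph_le
              intro x hx
              have h5 := ((hre x _).1 (hx.trans hsb)).2
              calc brv x ≤ bitrev k ((⟨a0 + 2^j, add_pow_lt hj ha0 hb0⟩ : Fin (2^k)) : ℕ) := h5
              _ = bitrev k a0 + 2^(k-1-j) := bitrev_add_pow hj hb0
            have b2 : bitrev k a0 ≤ alph J ι brv e.1 := alph_ge J ι brv hsa
            have b3 : alph J ι brv e.1 ≤ alph J ι brv e.2 :=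
              alph_mono J ι (Relation.ReflTransGen.single hJe) brv
            have hYe : Y e = alph J ι brv e.2 - alph J ι brv e.1 := rfl
            omega
          rw [if_pos bX, if_pos bY]
        · push_neg at hex
          have : (∑ a ∈ A j,
              (if e ∈ S j a then ((X e : ℝ)/2^j + (Y e : ℝ)/2^(k-1-j)) else 0)) = 0 := by
            apply Finset.sum_eq_zero
            intro a haA
            rw [if_neg (hex a haA)]
          rw [this]
          positivity
      calc (∑ j ∈ range k, ∑ a ∈ A j,
          (if e ∈ S j a then ((X e : ℝ)/2^j + (Y e : ℝ)/2^(k-1-j)) else 0))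
          ≤ ∑ j ∈ range k, ((if X e ≤ 2^j then ((X e : ℕ):ℝ)/2^j else 0)
            + (if Y e ≤ 2^(k-1-j) then ((Y e : ℕ):ℝ)/2^(k-1-j) else 0)) :=
            Finset.sum_le_sum perj
      _ = (∑ j ∈ range k, (if X e ≤ 2^j then ((X e : ℕ):ℝ)/2^j else 0))
            + ∑ j ∈ range k, (if Y e ≤ 2^(k-1-j) then ((Y e : ℕ):ℝ)/2^(k-1-j) else 0) :=
            Finset.sum_add_distrib
      _ ≤ 2 + 2 := by
            gcongr
            · exact geom_bound (X e) k
            · have hrefl := Finset.sum_range_reflect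
                (fun m => if Y e ≤ 2^m then ((Y e : ℕ):ℝ)/2^m else 0) k
              calc (∑ j ∈ range k, (if Y e ≤ 2^(k-1-j) then ((Y e : ℕ):ℝ)/2^(k-1-j) else 0))
                  = ∑ j ∈ range k, (if Y e ≤ 2^j then ((Y e : ℕ):ℝ)/2^j else 0) := hrefl
              _ ≤ 2 := geom_bound (Y e) k
      _ ≤ 4 := by norm_num
    calc ((k : ℝ) * 2^k) ≤ ∑ e ∈ E, ∑ j ∈ range k, ∑ a ∈ A j,
        (if e ∈ S j a then ((X e : ℝ)/2^j + (Y e : ℝ)/2^(k-1-j)) else 0) := low2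
    _ ≤ ∑ e ∈ E, (4:ℝ) := Finset.sum_le_sum per_arc
    _ = 4 * E.card := by rw [Finset.sum_const]; ring
  -- finish
  rw [hncard]
  have h0 : (0:ℝ) ≤ (@Fintype.card W instW : ℝ) := by positivity
  have hcast : ((2 ^ k * k : ℕ) : ℝ) = (2:ℝ)^k * (k:ℝ) := by push_cast; ring
  rw [hcast]
  nlinarith [main]
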